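/- In the E6 configuration, every pair of orthogonal lines extends to a triple of mutually orthogonal lines, and every triple of mutually orthogonal lines extends to a 4-tuple of mutually orthogonal lines within the configuration. -/

import Mathlib

/-- Vectors `(x; y; z) ∈ ℝ⁹` written as three blocks of three coordinates. -/
abbrev V9 : Type := Fin 3 → Fin 3 → ℝ

/-- The vector with blocks `a`, `b`, `c`. -/
def blk (a b c : Fin 3 → ℝ) : V9 := ![a, b, c]

/-- The standard inner product on `ℝ⁹`. -/
def dot9 (v w : V9) : ℝ := ∑ b, ∑ p, v b p * w b p

/-- The projective line (ray) spanned by a vector. -/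
def ray9 (v : V9) : Submodule ℝ V9 := Submodule.span ℝ {v}

/-- Orthogonality of subspaces of `ℝ⁹`. -/
def Perp9 (L M : Submodule ℝ V9) : Prop := ∀ x ∈ L, ∀ y ∈ M, dot9 x y = 0

/-- The three vectors `(1,−1,0)`, `(1,0,−1)`, `(0,1,−1)`. -/
def xis : Set (Fin 3 → ℝ) := {![1, -1, 0], ![1, 0, -1], ![0, 1, -1]}

/-- The three vectors `(2,−1,−1)`, `(−1,2,−1)`, `(−1,−1,2)`. -/
def etas : Set (Fin 3 → ℝ) := {![2, -1, -1], ![-1, 2, -1], ![-1, -1, 2]}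

/-- The 72 roots of `E6`, modeled in the subspace
`R = {(x;y;z) : Σxᵢ = Σyⱼ = Σzₖ = 0}` of `ℝ⁹`: the 9 vectors `(ξ;0;0)`, `(0;ξ;0)`,
`(0;0;ξ)` with `ξ ∈ xis`, the 27 vectors `(1/3)(ξ;η;ζ)` with `ξ,η,ζ ∈ etas`, and the
negatives of all of these. -/
def E6roots : Set V9 :=
  {v | ∃ w : V9, (v = w ∨ v = -w) ∧
    ((∃ ξ ∈ xis, w = blk ξ 0 0 ∨ w = blk 0 ξ 0 ∨ w = blk 0 0 ξ) ∨
     (∃ ξ ∈ etas, ∃ η ∈ etas, ∃ ζ ∈ etas, w = ((1 : ℝ) / 3) • blk ξ η ζ))}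

/-- The 36 projective lines of the `E6` configuration. -/
def E6lines : Set (Submodule ℝ V9) := ray9 '' E6roots

/- ### Auxiliary machinery -/

/-- Index type for the 36 lines: 9 of ξ-type, 27 of η-type. -/
abbrev I36 := (Fin 3 × Fin 3) ⊕ (Fin 3 × Fin 3 × Fin 3)

def xiv : Fin 3 → Fin 3 → ℝ := ![![1,-1,0], ![1,0,-1], ![0,1,-1]]
def etav : Fin 3 → Fin 3 → ℝ := ![![2,-1,-1], ![-1,2,-1], ![-1,-1,2]]

/-- Representative root for each line. -/
def rep : I36 → V9
  | .inl (b, i) => ![blk (xiv i) 0 0, blk 0 (xiv i) 0, blk 0 0 (xiv i)] b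
  | .inr (i, j, k) => blk (etav i) (etav j) (etav k)

def Xt : Fin 3 → Fin 3 → ℤ := ![![2,1,-1],![1,2,1],![-1,1,2]]
def Mt : Fin 3 → Fin 3 → ℤ := ![![3,-3,0],![3,0,-3],![0,3,-3]]
def Et : Fin 3 → Fin 3 → ℤ := ![![6,-3,-3],![-3,6,-3],![-3,-3,6]]

/-- Integer model of the inner products between representatives. -/
def zdot : I36 → I36 → ℤ
  | .inl (b,i), .inl (b',i') => if b = b' then Xt i i' else 0
  | .inl (b,i), .inr (j,k,l) => Mt i (![j,k,l] b)
  | .inr (j,k,l), .inl (b,i) => Mt i (![j,k,l] b)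
  | .inr (i,j,k), .inr (i',j',k') => Et i i' + Et j j' + Et k k'

def d3 (u v : Fin 3 → ℝ) : ℝ := ∑ p, u p * v p

lemma dot9_blk (a b c a' b' c' : Fin 3 → ℝ) :
    dot9 (blk a b c) (blk a' b' c') = d3 a a' + d3 b b' + d3 c c' := by
  simp [dot9, blk, d3, Fin.sum_univ_three]

lemma d3_zero_left (u : Fin 3 → ℝ) : d3 0 u = 0 := by simp [d3]
lemma d3_zero_right (u : Fin 3 → ℝ) : d3 u 0 = 0 := by simp [d3]
lemma d3_xx (i j : Fin 3) : d3 (xiv i) (xiv j) = (Xt i j : ℝ) := by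
  fin_cases i <;> fin_cases j <;> norm_num [d3, xiv, Xt, Fin.sum_univ_three, Matrix.cons_val_two, Matrix.tail_cons, Matrix.head_cons]
lemma d3_xe (i j : Fin 3) : d3 (xiv i) (etav j) = (Mt i j : ℝ) := by
  fin_cases i <;> fin_cases j <;> norm_num [d3, xiv, etav, Mt, Fin.sum_univ_three, Matrix.cons_val_two, Matrix.tail_cons, Matrix.head_cons]
lemma d3_ee (i j : Fin 3) : d3 (etav i) (etav j) = (Et i j : ℝ) := by
  fin_cases i <;> fin_cases j <;> norm_num [d3, etav, Et, Fin.sum_univ_three, Matrix.cons_val_two, Matrix.tail_cons, Matrix.head_cons]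
lemma d3_comm (u v : Fin 3 → ℝ) : d3 u v = d3 v u := by simp [d3, mul_comm]

lemma dotEq : ∀ a b : I36, dot9 (rep a) (rep b) = (zdot a b : ℝ) := by
  rintro (⟨b, i⟩ | ⟨i, j, k⟩) (⟨b', i'⟩ | ⟨i', j', k'⟩)
  · fin_cases b <;> fin_cases b' <;>
      simp [rep, zdot, dot9_blk, d3_zero_left, d3_zero_right, d3_xx]
  · fin_cases b <;>
      simp [rep, zdot, dot9_blk, d3_zero_left, d3_zero_right, d3_xe]
  · fin_cases b' <;>
      simp [rep, zdot, dot9_blk, d3_zero_left, d3_zero_right, d3_xe, d3_comm (etav _) (xiv _)]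
  · simp [rep, zdot, dot9_blk, d3_ee]

lemma zdiag : ∀ a : I36, zdot a a ≠ 0 := by decide

lemma ext2 : ∀ a b : I36, zdot a b = 0 → ∃ c, zdot a c = 0 ∧ zdot b c = 0 := by decide

set_option maxRecDepth 100000 in
set_option maxHeartbeats 4000000 in
lemma ext3 : ∀ a b c : I36, zdot a b = 0 ∧ zdot a c = 0 ∧ zdot b c = 0 →
    ∃ d, zdot a d = 0 ∧ zdot b d = 0 ∧ zdot c d = 0 := by decide

lemma ray9_smul (c : ℝ) (hc : c ≠ 0) (v : V9) : ray9 (c • v) = ray9 v := by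
  unfold ray9
  rw [Submodule.span_singleton_smul_eq (IsUnit.mk0 c hc) v]

lemma ray9_neg (v : V9) : ray9 (-v) = ray9 v := by
  have := ray9_smul (-1) (by norm_num) v
  simpa using this

lemma xiv_mem (i : Fin 3) : xiv i ∈ xis := by
  fin_cases i <;> simp [xiv, xis]
lemma etav_mem (i : Fin 3) : etav i ∈ etas := by
  fin_cases i <;> simp [etav, etas]

lemma coverA (a : I36) : ray9 (rep a) ∈ E6lines := by
  obtain ⟨b, i⟩ | ⟨i, j, k⟩ := a
  · refine ⟨rep (.inl (b, i)), ⟨rep (.inl (b, i)), Or.inl rfl,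
      Or.inl ⟨xiv i, xiv_mem i, ?_⟩⟩, rfl⟩
    fin_cases b <;> simp [rep]
  · refine ⟨(1/3 : ℝ) • rep (.inr (i, j, k)),
      ⟨(1/3 : ℝ) • rep (.inr (i, j, k)), Or.inl rfl,
        Or.inr ⟨etav i, etav_mem i, etav j, etav_mem j, etav k, etav_mem k, rfl⟩⟩, ?_⟩
    rw [ray9_smul (1/3) (by norm_num)]

lemma xis_eq {ξ : Fin 3 → ℝ} (h : ξ ∈ xis) : ∃ i, xiv i = ξ := by
  simp only [xis, Set.mem_insert_iff, Set.mem_singleton_iff] at h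
  rcases h with h | h | h
  exacts [⟨0, by simp [xiv, h]⟩, ⟨1, by simp [xiv, h]⟩, ⟨2, by simp [xiv, h]⟩]
lemma etas_eq {ξ : Fin 3 → ℝ} (h : ξ ∈ etas) : ∃ i, etav i = ξ := by
  simp only [etas, Set.mem_insert_iff, Set.mem_singleton_iff] at h
  rcases h with h | h | h
  exacts [⟨0, by simp [etav, h]⟩, ⟨1, by simp [etav, h]⟩, ⟨2, by simp [etav, h]⟩]

lemma coverB {L : Submodule ℝ V9} (hL : L ∈ E6lines) : ∃ a : I36, L = ray9 (rep a) := by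
  obtain ⟨v, ⟨w, hvw, hw⟩, rfl⟩ := hL
  have hray : ray9 v = ray9 w := by rcases hvw with rfl | rfl; exacts [rfl, ray9_neg w]
  rw [hray]
  rcases hw with ⟨ξ, hξ, hb⟩ | ⟨ξ, hξ, η, hη, ζ, hζ, rfl⟩
  · obtain ⟨i, rfl⟩ := xis_eq hξ
    rcases hb with rfl | rfl | rfl
    exacts [⟨.inl (0, i), by simp [rep]⟩, ⟨.inl (1, i), by simp [rep]⟩,
      ⟨.inl (2, i), by simp [rep]⟩]
  · obtain ⟨i, rfl⟩ := etas_eq hξ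
    obtain ⟨j, rfl⟩ := etas_eq hη
    obtain ⟨k, rfl⟩ := etas_eq hζ
    exact ⟨.inr (i, j, k), by rw [ray9_smul (1/3) (by norm_num)]; rfl⟩

lemma dot9_comm (v w : V9) : dot9 v w = dot9 w v := by simp [dot9, mul_comm]

lemma dot9_smul_left (t : ℝ) (v w : V9) : dot9 (t • v) w = t * dot9 v w := by
  simp [dot9, Finset.mul_sum, mul_assoc]

lemma perp_of_dot {v w : V9} (h : dot9 v w = 0) : Perp9 (ray9 v) (ray9 w) := by
  intro x hx y hy
  rw [ray9, Submodule.mem_span_singleton] at hx hy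
  obtain ⟨s, rfl⟩ := hx
  obtain ⟨t, rfl⟩ := hy
  rw [dot9_smul_left, dot9_comm, dot9_smul_left, dot9_comm w v, h]
  ring

lemma dot_of_perp {v w : V9} (h : Perp9 (ray9 v) (ray9 w)) : dot9 v w = 0 :=
  h v (Submodule.mem_span_singleton_self v) w (Submodule.mem_span_singleton_self w)

lemma perp9_symm : Symmetric Perp9 := fun _ _ h x hx y hy => by
  rw [dot9_comm]; exact h y hy x hx

lemma zdot_of_perp {a b : I36} (h : Perp9 (ray9 (rep a)) (ray9 (rep b))) : zdot a b = 0 := by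
  have hd := dot_of_perp h
  rw [dotEq] at hd
  exact_mod_cast hd

lemma perp_of_zdot {a b : I36} (h : zdot a b = 0) :
    Perp9 (ray9 (rep a)) (ray9 (rep b)) := by
  refine perp_of_dot ?_
  rw [dotEq, h]
  norm_num

lemma ray_ne_of_zdot {a b : I36} (h : zdot a b = 0) : ray9 (rep b) ≠ ray9 (rep a) := by
  intro he
  have hp := perp_of_zdot h
  rw [← he] at hp
  exact zdiag b (zdot_of_perp hp)

/-- in the `E6` configuration every pair of orthogonal lines extends to
a triple of mutually orthogonal lines, and every triple of mutually orthogonal lines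
extends to a 4-tuple of mutually orthogonal lines within the configuration. -/
theorem stmt_14 :
    (∀ S ⊆ E6lines, S.ncard = 2 → S.Pairwise Perp9 →
      ∃ T, S ⊆ T ∧ T ⊆ E6lines ∧ T.ncard = 3 ∧ T.Pairwise Perp9) ∧
    (∀ S ⊆ E6lines, S.ncard = 3 → S.Pairwise Perp9 →
      ∃ T, S ⊆ T ∧ T ⊆ E6lines ∧ T.ncard = 4 ∧ T.Pairwise Perp9) := by
  constructor
  · intro S hsub hcard hpw
    obtain ⟨L1, L2, hne, rfl⟩ := Set.ncard_eq_two.mp hcard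
    obtain ⟨a, ha⟩ := coverB (hsub (show L1 ∈ _ by simp))
    obtain ⟨b, hb⟩ := coverB (hsub (show L2 ∈ _ by simp))
    subst ha; subst hb
    have hperp : Perp9 (ray9 (rep a)) (ray9 (rep b)) := hpw (by simp) (by simp) hne
    obtain ⟨c, h1, h2⟩ := ext2 a b (zdot_of_perp hperp)
    have hnm : ray9 (rep c) ∉ ({ray9 (rep a), ray9 (rep b)} : Set (Submodule ℝ V9)) := by
      intro hmem
      rcases hmem with h | h
      exacts [ray_ne_of_zdot h1 h, ray_ne_of_zdot h2 h]
    refine ⟨insert (ray9 (rep c)) {ray9 (rep a), ray9 (rep b)}, Set.subset_insert _ _,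
      ?_, ?_, ?_⟩
    · intro L hL
      rcases Set.mem_insert_iff.mp hL with rfl | hm
      exacts [coverA c, hsub hm]
    · rw [Set.ncard_insert_of_notMem hnm (Set.toFinite _), hcard]
    · letI : Std.Symm Perp9 := ⟨fun _ _ h => perp9_symm h⟩; rw [Set.pairwise_insert_of_symm]
      refine ⟨hpw, ?_⟩
      intro L hL _
      rcases hL with rfl | rfl
      · exact perp9_symm (perp_of_zdot h1)
      · exact perp9_symm (perp_of_zdot h2)
  · intro S hsub hcard hpw
    obtain ⟨L1, L2, L3, h12, h13, h23, rfl⟩ := Set.ncard_eq_three.mp hcard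
    obtain ⟨a, ha⟩ := coverB (hsub (show L1 ∈ _ by simp))
    obtain ⟨b, hb⟩ := coverB (hsub (show L2 ∈ _ by simp))
    obtain ⟨c, hc⟩ := coverB (hsub (show L3 ∈ _ by simp))
    subst ha; subst hb; subst hc
    have hab : zdot a b = 0 := zdot_of_perp (hpw (by simp) (by simp) h12)
    have hac : zdot a c = 0 := zdot_of_perp (hpw (by simp) (by simp) h13)
    have hbc : zdot b c = 0 := zdot_of_perp (hpw (by simp) (by simp) h23)
    obtain ⟨d, h1, h2, h3⟩ := ext3 a b c ⟨hab, hac, hbc⟩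
    have hnm : ray9 (rep d) ∉
        ({ray9 (rep a), ray9 (rep b), ray9 (rep c)} : Set (Submodule ℝ V9)) := by
      intro hmem
      rcases hmem with h | h | h
      exacts [ray_ne_of_zdot h1 h, ray_ne_of_zdot h2 h, ray_ne_of_zdot h3 h]
    refine ⟨insert (ray9 (rep d)) {ray9 (rep a), ray9 (rep b), ray9 (rep c)},
      Set.subset_insert _ _, ?_, ?_, ?_⟩
    · intro L hL
      rcases Set.mem_insert_iff.mp hL with rfl | hm
      exacts [coverA d, hsub hm]
    · rw [Set.ncard_insert_of_notMem hnm (Set.toFinite _), hcard]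
    · letI : Std.Symm Perp9 := ⟨fun _ _ h => perp9_symm h⟩; rw [Set.pairwise_insert_of_symm]
      refine ⟨hpw, ?_⟩
      intro L hL _
      rcases hL with rfl | rfl | rfl
      · exact perp9_symm (perp_of_zdot h1)
      · exact perp9_symm (perp_of_zdot h2)
      · exact perp9_symm (perp_of_zdot h3)
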